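/- Let S ⊆ ℝ³ be a closed set that is curtained. Let C ⊆ ℝ² be locally boundary connected in ℝ², let f : C → ℝ be continuous, and suppose the graph D = {(x, f(x)) : x ∈ C} is contained in S. Let p ∈ closure(C) \ C and suppose S has no curtain at p, i.e. {p} × ℝ is not contained in S. Let D' = {(x, y) ∈ ℝ² × [-∞, ∞] : x ∈ C, y = f(x)} be the graph of f viewed inside ℝ² × [-∞, ∞]. Then: (a) there exists a unique b ∈ [-∞, ∞] such that {y ∈ [-∞, ∞] : (p, y) ∈ closure(D')} = {b} (closure in ℝ² × [-∞, ∞]); (b) f(x) tends to b in [-∞, ∞] as x tends to p with x ∈ C (i.e. for every neighbourhood V of b in [-∞, ∞] there is a neighbourhood U of p in ℝ² with f(C ∩ U) ⊆ V); and (c) if b ∉ {-∞, ∞}, then (p, b) ∈ S. -/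

import Mathlib

open Filter Topology Set

/-- A subset `X` of a topological space is *locally boundary connected* if every point of
the boundary `closure X \ X` has a base of neighbourhoods `N` such that `X ∩ N` is
connected. -/
def LocallyBoundaryConnected {α : Type*} [TopologicalSpace α] (X : Set α) : Prop :=
  ∀ p ∈ closure X \ X, ∀ U ∈ nhds p, ∃ N ∈ nhds p, N ⊆ U ∧ IsConnected (X ∩ N)

/-- A point `(p, b)` lies in the closure of the graph of `g` over `C` iff `b` is a
cluster value of `g` along `𝓝[C] p`. -/
lemma mem_closure_graph_iff {α β : Type*} [TopologicalSpace α] [TopologicalSpace β]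
    (C : Set α) (g : α → β) (p : α) (b : β) :
    (p, b) ∈ closure {q : α × β | q.1 ∈ C ∧ q.2 = g q.1} ↔ MapClusterPt b (𝓝[C] p) g := by
  constructor
  · intro h
    rw [mem_closure_iff_nhds] at h
    rw [MapClusterPt, clusterPt_iff_nonempty]
    intro U hU V hV
    rcases mem_nhdsWithin.1 (mem_map.1 hV) with ⟨W, hWopen, hpW, hWC⟩
    obtain ⟨q, hq1, hq2⟩ := h (W ×ˢ U) (prod_mem_nhds (hWopen.mem_nhds hpW) hU)
    refine ⟨g q.1, ?_, hWC ⟨hq1.1, hq2.1⟩⟩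
    rw [← hq2.2]; exact hq1.2
  · intro h
    rw [mem_closure_iff_nhds]
    intro t ht
    rcases mem_nhds_prod_iff.1 ht with ⟨U, hU, V, hV, hUV⟩
    have hmem : g '' (C ∩ U) ∈ Filter.map g (𝓝[C] p) :=
      mem_map.2 (mem_of_superset
        (inter_mem self_mem_nhdsWithin (mem_nhdsWithin_of_mem_nhds hU))
        (Set.subset_preimage_image g _))
    obtain ⟨y, hyV, x, hx, hgx⟩ := clusterPt_iff_nonempty.1 h hV hmem
    exact ⟨(x, g x), hUV ⟨hx.2, by rw [hgx]; exact hyV⟩, hx.1, rfl⟩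

/-- let `S ⊆ ℝ³ = ℝ² × ℝ` be closed and curtained, `C ⊆ ℝ²` locally
boundary connected, `f : C → ℝ` continuous with graph `D ⊆ S`, and `p ∈ closure C \ C`
a point at which `S` has no curtain. Let `D'` be the graph of `f` inside `ℝ² × [-∞, ∞]`.
Then (a) there is a unique `b ∈ [-∞, ∞]` with fibre of `closure D'` over `p` equal to
`{b}`; (b) `f(x) → b` as `x → p` within `C`; (c) if `b` is real then `(p, b) ∈ S`. -/
theorem bypass_closed_curtained
    (S : Set ((Fin 2 → ℝ) × ℝ)) (hSclosed : IsClosed S)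
    (hScurt : ∀ q : Fin 2 → ℝ, {y : ℝ | (q, y) ∈ S}.Finite ∨ ∀ y : ℝ, (q, y) ∈ S)
    (C : Set (Fin 2 → ℝ)) (hC : LocallyBoundaryConnected C)
    (f : (Fin 2 → ℝ) → ℝ) (hf : ContinuousOn f C)
    (hDS : ∀ x ∈ C, (x, f x) ∈ S)
    (p : Fin 2 → ℝ) (hp : p ∈ closure C \ C)
    (hnc : ¬ ∀ y : ℝ, (p, y) ∈ S)
    (D' : Set ((Fin 2 → ℝ) × EReal))
    (hD' : D' = {q | q.1 ∈ C ∧ q.2 = (f q.1 : EReal)}) :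
    (∃! b : EReal, {y : EReal | (p, y) ∈ closure D'} = {b}) ∧
      ∀ b : EReal, {y : EReal | (p, y) ∈ closure D'} = {b} →
        Filter.Tendsto (fun x => (f x : EReal)) (nhdsWithin p C) (nhds b) ∧
          ∀ r : ℝ, b = (r : EReal) → (p, r) ∈ S := by
  set g : (Fin 2 → ℝ) → EReal := fun x => ((f x : ℝ) : EReal) with hg
  set F : Set EReal := {y : EReal | (p, y) ∈ closure D'} with hF
  have hFiff : ∀ b : EReal, b ∈ F ↔ MapClusterPt b (𝓝[C] p) g := by
    intro b
    rw [hF, mem_setOf_eq, hD']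
    exact mem_closure_graph_iff C g p b
  have hpc : p ∈ closure C := hp.1
  haveI hne : (𝓝[C] p).NeBot := mem_closure_iff_nhdsWithin_neBot.1 hpc
  -- F is nonempty
  have hF0 : F.Nonempty := by
    obtain ⟨b₀, hb₀⟩ := exists_clusterPt_of_compactSpace (Filter.map g (𝓝[C] p))
    exact ⟨b₀, (hFiff b₀).2 hb₀⟩
  -- real points of F lie in (the fibre of) S
  have hreal : ∀ r : ℝ, ((r : EReal) ∈ F) → (p, r) ∈ S := by
    intro r hr
    have hind : Topology.IsInducing
        (Prod.map (id : (Fin 2 → ℝ) → (Fin 2 → ℝ)) ((↑) : ℝ → EReal)) :=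
      Topology.IsInducing.id.prodMap EReal.isEmbedding_coe.toIsInducing
    have hDD' : Prod.map (id : (Fin 2 → ℝ) → (Fin 2 → ℝ)) ((↑) : ℝ → EReal) ''
        {q : (Fin 2 → ℝ) × ℝ | q.1 ∈ C ∧ q.2 = f q.1} = D' := by
      rw [hD']; ext ⟨x, y⟩
      constructor
      · rintro ⟨⟨a, b⟩, ⟨haC, hbf⟩, heq⟩
        simp only [Prod.map, id_eq, Prod.mk.injEq] at heq
        obtain ⟨h1, h2⟩ := heq
        subst h1
        refine ⟨haC, ?_⟩
        rw [← h2]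
        exact congrArg Real.toEReal hbf
      · rintro ⟨hxC, hy⟩
        have hy' : y = ((f x : ℝ) : EReal) := hy
        exact ⟨(x, f x), ⟨hxC, rfl⟩, Prod.ext rfl hy'.symm⟩
    have hmem : (p, r) ∈ closure {q : (Fin 2 → ℝ) × ℝ | q.1 ∈ C ∧ q.2 = f q.1} := by
      rw [hind.closure_eq_preimage_closure_image, mem_preimage, hDD']
      exact hr
    have hsub : {q : (Fin 2 → ℝ) × ℝ | q.1 ∈ C ∧ q.2 = f q.1} ⊆ S := by
      rintro ⟨x, y⟩ ⟨hxC, hyf⟩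
      have hyf' : y = f x := hyf
      subst hyf'
      exact hDS x hxC
    exact closure_minimal hsub hSclosed hmem
  -- F is finite
  have hA : {y : ℝ | (p, y) ∈ S}.Finite := (hScurt p).resolve_right hnc
  have hFfin : F.Finite := by
    refine Set.Finite.subset (((hA.image (fun r : ℝ => (r : EReal))).insert ⊥).insert ⊤) ?_
    intro y hy
    induction y using EReal.rec with
    | bot => simp
    | top => simp
    | coe r => exact Or.inr (Or.inr ⟨r, hreal r hy, rfl⟩)
  -- every member of F is in the closure of every local image of g
  have hFsub : ∀ b ∈ F, ∀ N ∈ 𝓝 p, b ∈ closure (g '' (C ∩ N)) := by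
    intro b hb N hN
    have h1 := (hFiff b).1 hb
    have hmem : g '' (C ∩ N) ∈ Filter.map g (𝓝[C] p) :=
      mem_map.2 (mem_of_superset
        (inter_mem self_mem_nhdsWithin (mem_nhdsWithin_of_mem_nhds hN))
        (Set.subset_preimage_image g _))
    have h1' : ClusterPt b (Filter.map g (𝓝[C] p)) := h1
    exact mem_closure_iff_clusterPt.2 (h1'.mono (le_principal_iff.2 hmem))
  -- F is a singleton
  have huniq : ∀ b₁ ∈ F, ∀ b₂ ∈ F, b₁ = b₂ := by
    by_contra hcon
    push_neg at hcon
    obtain ⟨b₁, hb₁, b₂, hb₂, hne12⟩ := hcon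
    -- separate {b₁} from F \ {b₁}
    obtain ⟨U, V, hUopen, hVopen, hUb, hVF, hUV⟩ :=
      SeparatedNhds.of_isCompact_isCompact (isCompact_singleton (x := b₁))
        (hFfin.diff (t := {b₁})).isCompact
        (disjoint_singleton_left.2 (fun h => h.2 rfl))
    set K : Set EReal := (U ∪ V)ᶜ with hK
    have hKclosed : IsClosed K := (hUopen.union hVopen).isClosed_compl
    -- the index type of admissible neighbourhoods
    let ι := {N : Set (Fin 2 → ℝ) // N ∈ 𝓝 p ∧ IsConnected (C ∩ N)}
    haveI : Nonempty ι := by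
      obtain ⟨N, hN, -, hconn⟩ := hC p hp Set.univ Filter.univ_mem
      exact ⟨⟨N, hN, hconn⟩⟩
    set T : ι → Set EReal := fun i => closure (g '' (C ∩ i.1)) ∩ K with hT
    have hdir : Directed (· ⊇ ·) T := by
      intro i j
      obtain ⟨N, hN, hsub, hconn⟩ := hC p hp (i.1 ∩ j.1) (inter_mem i.2.1 j.2.1)
      refine ⟨⟨N, hN, hconn⟩, ?_, ?_⟩ <;>
        exact inter_subset_inter_left K (closure_mono (Set.image_mono
          (inter_subset_inter_right C (hsub.trans (by simp)))))
    have hnonemp : ∀ i, (T i).Nonempty := by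
      rintro ⟨N, hN, hconn⟩
      have hgc : ContinuousOn g (C ∩ N) :=
        continuous_coe_real_ereal.comp_continuousOn (hf.mono inter_subset_left)
      have hcl : IsConnected (closure (g '' (C ∩ N))) := (hconn.image g hgc).closure
      rcases (closure (g '' (C ∩ N)) ∩ K).eq_empty_or_nonempty with hemp | hne'
      · exfalso
        have hsubUV : closure (g '' (C ∩ N)) ⊆ U ∪ V := by
          intro x hx
          by_contra hxK
          exact (Set.eq_empty_iff_forall_notMem.1 hemp x) ⟨hx, hxK⟩
        have hb₁' : b₁ ∈ closure (g '' (C ∩ N)) := hFsub b₁ hb₁ N hN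
        have hb₂' : b₂ ∈ closure (g '' (C ∩ N)) := hFsub b₂ hb₂ N hN
        obtain ⟨x, hxs, hxU, hxV⟩ := hcl.isPreconnected U V hUopen hVopen hsubUV
          ⟨b₁, hb₁', hUb rfl⟩ ⟨b₂, hb₂', hVF ⟨hb₂, fun h => hne12 h.symm⟩⟩
        exact Set.disjoint_left.1 hUV hxU hxV
      · exact hne'
    have hclosed : ∀ i, IsClosed (T i) := fun i => isClosed_closure.inter hKclosed
    have hcomp : ∀ i, IsCompact (T i) := fun i => (hclosed i).isCompact
    obtain ⟨y, hy⟩ :=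
      IsCompact.nonempty_iInter_of_directed_nonempty_isCompact_isClosed T hdir hnonemp hcomp hclosed
    have hyF : y ∈ F := by
      refine (hFiff y).2 (clusterPt_iff_nonempty.2 ?_)
      intro Vy hVy s hs
      rcases mem_nhdsWithin.1 (mem_map.1 hs) with ⟨W, hWopen, hpW, hWC⟩
      obtain ⟨N, hN, hNW, hconn⟩ := hC p hp W (hWopen.mem_nhds hpW)
      have hyN : y ∈ closure (g '' (C ∩ N)) :=
        (Set.mem_iInter.1 hy ⟨N, hN, hconn⟩).1
      obtain ⟨z, hzV, x, hx, hgx⟩ := mem_closure_iff_nhds.1 hyN Vy hVy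
      exact ⟨z, hzV, by rw [← hgx]; exact hWC ⟨hNW hx.2, hx.1⟩⟩
    have hyK : y ∈ K := (Set.mem_iInter.1 hy (Classical.arbitrary ι)).2
    rcases eq_or_ne y b₁ with h | h
    · exact hyK (Or.inl (h ▸ hUb rfl))
    · exact hyK (Or.inr (hVF ⟨hyF, h⟩))
  obtain ⟨b₀, hb₀⟩ := hF0
  have hFeq : F = {b₀} :=
    Set.eq_singleton_iff_unique_mem.2 ⟨hb₀, fun y hy => huniq y hy b₀ hb₀⟩
  constructor
  · exact ⟨b₀, hFeq, fun c hc => by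
      have : ({b₀} : Set EReal) = {c} := hFeq ▸ hc
      exact (Set.singleton_eq_singleton_iff.1 this).symm⟩
  · intro b hFb
    have hbF : b ∈ F := by rw [hFb]; rfl
    constructor
    · refine isCompact_univ.tendsto_nhds_of_unique_mapClusterPt
        (Filter.Eventually.of_forall fun x => Set.mem_univ _) ?_
      intro x _ hx
      have : x ∈ F := (hFiff x).2 hx
      rw [hFb] at this
      exact this
    · intro r hr
      exact hreal r (hr ▸ hbF)
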